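/- Let r ≥ 2, e ≥ 2, s ∈ ℤ, and let λ, μ be partitions with λ ∼_e μ. Then η(λ, s) →^r_1 η(μ, s) (a type-1 move at level r on the e-quotient data) if and only if Φ_r(λ, s) →^e_1 Φ_r(μ, s) (a type-1 move at level e on the r-tuple of abacuses). -/

import Mathlib

/-- A partition: a weakly decreasing sequence of non-negative integers,
eventually zero.  `part i` is the `(i+1)`-st part `λ_{i+1}`. -/
structure PartitionSeq where
  part : ℕ → ℕ
  antitone : ∀ i j : ℕ, i ≤ j → part j ≤ part i
  eventually_zero : ∃ N : ℕ, ∀ i : ℕ, N ≤ i → part i = 0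

/-- The empty partition. -/
def zeroPart : PartitionSeq := ⟨fun _ => 0, fun _ _ _ => le_rfl, ⟨0, fun _ _ => rfl⟩⟩

/-- A β-set: a set of integers containing all sufficiently small integers and
excluding all sufficiently large ones. -/
def IsBetaSet (B : Set ℤ) : Prop :=
  (∃ N : ℤ, ∀ z : ℤ, z < N → z ∈ B) ∧ (∃ M : ℤ, ∀ z : ℤ, M < z → z ∉ B)

/-- The β-set `B_s(λ) = {λ_i - i + s : i ≥ 1}`. -/
def betaSet (lam : PartitionSeq) (s : ℤ) : Set ℤ :=
  {b : ℤ | ∃ i : ℕ, b = (lam.part i : ℤ) - ((i : ℤ) + 1) + s}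

/-- `|λ|`, the sum of the parts of a partition. -/
noncomputable def psize (lam : PartitionSeq) : ℕ := ∑ᶠ i, lam.part i

/-- The pair `(λ, s)` corresponding to a β-set (junk value if none exists). -/
noncomputable def partOfBeta (B : Set ℤ) : PartitionSeq × ℤ :=
  letI := Classical.propDecidable (∃ p : PartitionSeq × ℤ, betaSet p.1 p.2 = B)
  if h : ∃ p : PartitionSeq × ℤ, betaSet p.1 p.2 = B then h.choose else (zeroPart, 0)

/-- The β-set `C_i` of runner `i`: the rows `m` with a bead at position `m*e+i`. -/
def quotSetB (e : ℕ) (B : Set ℤ) (i : ℕ) : Set ℤ :=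
  {m : ℤ | m * (e : ℤ) + (i : ℤ) ∈ B}

/-- `ρ_i`: the `i`-th component of the `e`-quotient of the configuration `B`. -/
noncomputable def rhoB (e : ℕ) (B : Set ℤ) (i : ℕ) : PartitionSeq :=
  (partOfBeta (quotSetB e B i)).1

/-- `t_i`: the charge of runner `i` of the configuration `B`. -/
noncomputable def tB (e : ℕ) (B : Set ℤ) (i : ℕ) : ℤ :=
  (partOfBeta (quotSetB e B i)).2

/-- `|ρ| = Σ_i |ρ_i|`, the size of the `e`-quotient of `B`. -/
noncomputable def wtB (e : ℕ) (B : Set ℤ) : ℕ :=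
  ∑ i ∈ Finset.range e, psize (rhoB e B i)

/-- `B` is a (`c`-shifted) Rouquier configuration: `wt ≤ t_{i+1} - t_i + c`
for all `0 ≤ i < e-1`.  `c = 1` gives Rouquier, `c = r` gives `r`-Rouquier. -/
def IsRouquierB (e : ℕ) (B : Set ℤ) (c : ℤ) : Prop :=
  ∀ i : ℕ, i + 1 < e → (wtB e B : ℤ) ≤ tB e B (i + 1) - tB e B i + c

/-- Uglov's map `ψ_k`: sends `me + i` (with `0 ≤ i < e`) to `((m+1)r - k)e + i`. -/
def psi (e r k x : ℤ) : ℤ := ((Int.ediv x e + 1) * r - k) * e + Int.emod x e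

/-- Uglov's map `Ψ_r` on β-sets: `⨆_{k=1}^r ψ_k(B_k)`. -/
def uglovSet (e r : ℕ) (B : Fin r → Set ℤ) : Set ℤ :=
  ⋃ k : Fin r, psi (e : ℤ) (r : ℤ) (((k : ℕ) : ℤ) + 1) '' B k

/-- The number of nodes of the Young diagram of `λ` with `e`-residue `j`
(for charge `0`). -/
noncomputable def resCount (e : ℕ) (lam : PartitionSeq) (j : ZMod e) : ℕ :=
  {p : ℕ × ℕ | p.2 < lam.part p.1 ∧ ((p.2 : ZMod e) - (p.1 : ZMod e) = j)}.ncard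

/-- The block relation `λ ∼_e μ` for partitions: equal size and equal
multisets of `e`-residues. -/
def SimE (e : ℕ) (lam mu : PartitionSeq) : Prop :=
  psize lam = psize mu ∧ ∀ j : ZMod e, resCount e lam j = resCount e mu j

/-- The number of nodes of the Young diagram of a multipartition with
`e`-residue `j`, for the multicharge `s`. -/
noncomputable def mresCount (e : ℕ) {r : ℕ} (lam : Fin r → PartitionSeq)
    (s : Fin r → ℤ) (j : ZMod e) : ℕ :=
  ∑ k : Fin r, {p : ℕ × ℕ |
    p.2 < (lam k).part p.1 ∧ ((s k : ZMod e) + (p.2 : ZMod e) - (p.1 : ZMod e) = j)}.ncard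

/-- The block relation `(λ, s) ≈_e (μ, s)` for multipartitions with the same
multicharge: equal size and equal multisets of `e`-residues. -/
def MSimE (e : ℕ) {r : ℕ} (lam mu : Fin r → PartitionSeq) (s : Fin r → ℤ) : Prop :=
  (∑ k, psize (lam k)) = (∑ k, psize (mu k)) ∧
    ∀ j : ZMod e, mresCount e lam s j = mresCount e mu s j

/-- The `e`-core abacus configuration of `B`: all beads pushed up on their
runners. -/
noncomputable def eCoreSet (e : ℕ) (B : Set ℤ) : Set ℤ :=
  {b : ℤ | ∃ i : ℕ, i < e ∧ ∃ m : ℤ, m < tB e B i ∧ b = m * (e : ℤ) + (i : ℤ)}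

/-- The `e`-core of `λ` (computed via the abacus with charge `s`). -/
noncomputable def eCore (e : ℕ) (lam : PartitionSeq) (s : ℤ) : PartitionSeq :=
  (partOfBeta (eCoreSet e (betaSet lam s))).1

/-- The `e`-weight of `λ`: `(|λ| - |e-core(λ)|)/e`. -/
noncomputable def eWeight (e : ℕ) (lam : PartitionSeq) (s : ℤ) : ℤ :=
  ((psize lam : ℤ) - (psize (eCore e lam s) : ℤ)) / (e : ℤ)

/-- Replace the bead at position `b` by a bead at position `c`. -/
def replaceBead (S : Set ℤ) (b c : ℤ) : Set ℤ := insert c (S \ {b})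

/-- Perform two bead replacements, `b₁ ↦ c₁` in component `k₁` and then
`b₂ ↦ c₂` in component `k₂`. -/
def twoBeadUpdate {ι : Type*} [DecidableEq ι] (B : ι → Set ℤ)
    (k₁ : ι) (b₁ c₁ : ℤ) (k₂ : ι) (b₂ c₂ : ℤ) : ι → Set ℤ :=
  Function.update (Function.update B k₁ (replaceBead (B k₁) b₁ c₁)) k₂
    (replaceBead (Function.update B k₁ (replaceBead (B k₁) b₁ c₁) k₂) b₂ c₂)

/-- Type-1 move at level `N`: decrease a β-number by `N` in component `k₁`
and increase a β-number by `N` in component `k₂`. -/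
def Move1 {ι : Type*} [DecidableEq ι] (N : ℤ) (B B' : ι → Set ℤ) : Prop :=
  ∃ k₁ k₂ : ι, ∃ b₁ b₂ : ℤ,
    b₁ ∈ B k₁ ∧ b₁ - N ∉ B k₁ ∧ b₂ ∈ B k₂ ∧ b₂ + N ∉ B k₂ ∧
    B' = twoBeadUpdate B k₁ b₁ (b₁ - N) k₂ b₂ (b₂ + N)

/-- Type-2 move at level `N`: for `b₁ ≡ b₂ (mod N)` and `h > 0`, replace `b₁`
by `b₁ + h` in component `k₁` and `b₂ + h` by `b₂` in component `k₂`. -/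
def Move2 {ι : Type*} [DecidableEq ι] (N : ℤ) (B B' : ι → Set ℤ) : Prop :=
  ∃ k₁ k₂ : ι, ∃ b₁ b₂ h : ℤ, 0 < h ∧ ((N : ℤ) ∣ b₁ - b₂) ∧
    b₁ ∈ B k₁ ∧ b₁ + h ∉ B k₁ ∧ b₂ ∉ B k₂ ∧ b₂ + h ∈ B k₂ ∧
    B' = twoBeadUpdate B k₁ b₁ (b₁ + h) k₂ (b₂ + h) b₂

/-- The block relation on tuples of abacus configurations: the reflexive
transitive closure of type-1 and type-2 moves at level `N`. -/
def BlockEq {ι : Type*} [DecidableEq ι] (N : ℤ) (B B' : ι → Set ℤ) : Prop :=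
  Relation.ReflTransGen (fun X Y => Move1 N X Y ∨ Move2 N X Y) B B'

/-- The stretching operation on a single abacus configuration: shift the
content of runner `i` by `M i`, leaving the `e`-quotient unchanged. -/
def strSet (e : ℕ) (M : ℕ → ℤ) (B : Set ℤ) : Set ℤ :=
  {b : ℤ | ∃ i : ℕ, i < e ∧ ∃ m : ℤ, m * (e : ℤ) + (i : ℤ) ∈ B ∧
    b = (m + M i) * (e : ℤ) + (i : ℤ)}


/-! ### Auxiliary lemmas for stmt11 -/

private lemma dm_ediv (e : ℕ) (he : 0 < e) (m : ℤ) (i : ℕ) (hi : i < e) :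
    (m * e + i).ediv e = m := by
  show (m * (e:ℤ) + i) / e = m
  rw [show m * (e:ℤ) + i = i + m * e by ring,
    Int.add_mul_ediv_right _ _ (by exact_mod_cast he.ne' : (e:ℤ) ≠ 0),
    Int.ediv_eq_zero_of_lt (by positivity) (by exact_mod_cast hi)]
  ring

private lemma dm_emod (e : ℕ) (m : ℤ) (i : ℕ) (hi : i < e) :
    (m * e + i).emod e = i := by
  show (m * (e:ℤ) + i) % e = i
  rw [show m * (e:ℤ) + i = i + m * e by ring, Int.add_mul_emod_self_right]
  exact Int.emod_eq_of_lt (by positivity) (by exact_mod_cast hi)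

private lemma mem_tbu {ι : Type*} [DecidableEq ι] (B : ι → Set ℤ)
    (k₁ : ι) (b₁ c₁ : ℤ) (k₂ : ι) (b₂ c₂ : ℤ) (i : ι) (n : ℤ) :
    n ∈ twoBeadUpdate B k₁ b₁ c₁ k₂ b₂ c₂ i ↔
      ((i, n) = (k₂, c₂) ∨
        (((i, n) = (k₁, c₁) ∨ (n ∈ B i ∧ (i, n) ≠ (k₁, b₁))) ∧ (i, n) ≠ (k₂, b₂))) := by
  by_cases h : k₁ = k₂ <;> by_cases h2 : i = k₂ <;> by_cases h1 : i = k₁ <;>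
    first
    | (subst h; subst h1
       simp only [twoBeadUpdate, Function.update_self, Function.update_apply, replaceBead,
         Set.mem_insert_iff, Set.mem_diff, Set.mem_singleton_iff, Prod.mk.injEq, ne_eq,
         not_and, if_pos rfl, true_and]
       tauto)
    | (first | subst h1 | subst h2 | skip
       simp only [twoBeadUpdate, Function.update_apply, replaceBead,
         Set.mem_insert_iff, Set.mem_diff, Set.mem_singleton_iff, Prod.mk.injEq, ne_eq,
         not_and] <;>
       simp_all <;> tauto)

private lemma move1_map {ι ι' : Type*} [DecidableEq ι] [DecidableEq ι'] (N N' : ℤ)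
    (A A' : ι → Set ℤ) (C C' : ι' → Set ℤ)
    (f : ι × ℤ → ι' × ℤ) (g : ι' × ℤ → ι × ℤ)
    (hgf : ∀ p, g (f p) = p) (hfg : ∀ p, f (g p) = p)
    (hshift : ∀ i n, f (i, n + N) = ((f (i, n)).1, (f (i, n)).2 + N'))
    (hmem : ∀ i n, n ∈ A i ↔ (f (i, n)).2 ∈ C (f (i, n)).1)
    (hmem' : ∀ i n, n ∈ A' i ↔ (f (i, n)).2 ∈ C' (f (i, n)).1) :
    Move1 N A A' → Move1 N' C C' := by
  have finj : Function.Injective f := Function.LeftInverse.injective hgf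
  rintro ⟨k₁, k₂, b₁, b₂, h₁, h₂, h₃, h₄, hEq⟩
  have hsub : ∀ i n, f (i, n - N) = ((f (i, n)).1, (f (i, n)).2 - N') := by
    intro i n
    have h := hshift i (n - N)
    rw [sub_add_cancel] at h
    rw [h]; simp
  refine ⟨(f (k₁, b₁)).1, (f (k₂, b₂)).1, (f (k₁, b₁)).2, (f (k₂, b₂)).2, ?_, ?_, ?_, ?_, ?_⟩
  · exact (hmem k₁ b₁).mp h₁
  · intro hc
    exact h₂ ((hmem k₁ (b₁ - N)).mpr (by rw [hsub k₁ b₁]; exact hc))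
  · exact (hmem k₂ b₂).mp h₃
  · intro hc
    exact h₄ ((hmem k₂ (b₂ + N)).mpr (by rw [hshift k₂ b₂]; exact hc))
  · funext k
    ext x
    set p := g (k, x) with hpdef
    have hp : f p = (k, x) := hfg (k, x)
    have key : ∀ q : ι × ℤ, (p = q) ↔ ((k, x) = f q) := by
      intro q; rw [← hp]; exact finj.eq_iff.symm
    have hL : x ∈ C' k ↔ p.2 ∈ A' p.1 := by
      have h := hmem' p.1 p.2
      rw [Prod.mk.eta, hp] at h
      exact h.symm
    have hm : p.2 ∈ A p.1 ↔ x ∈ C k := by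
      have h := hmem p.1 p.2
      rwa [Prod.mk.eta, hp] at h
    rw [show ∀ (a : ℤ) (t : Set ℤ), (a ∈ t) = t a from fun _ _ => rfl] at hL ⊢
    rw [hL, hEq, mem_tbu, mem_tbu]
    simp only [Prod.mk.eta, ne_eq, key, hm, hshift k₂ b₂, hsub k₁ b₁]

theorem stmt11 (e r : ℕ) (he : 2 ≤ e) (hr : 2 ≤ r) (s : ℤ)
    (lam mu : PartitionSeq) (hsim : SimE e lam mu) :
    Move1 (r : ℤ) (fun i : Fin e => quotSetB e (betaSet lam s) (i : ℕ))
        (fun i : Fin e => quotSetB e (betaSet mu s) (i : ℕ)) ↔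
      Move1 (e : ℤ)
        (fun k : Fin r => psi (e : ℤ) (r : ℤ) (((k : ℕ) : ℤ) + 1) ⁻¹' betaSet lam s)
        (fun k : Fin r => psi (e : ℤ) (r : ℤ) (((k : ℕ) : ℤ) + 1) ⁻¹' betaSet mu s) := by
  have he0 : 0 < e := by omega
  have hr0 : 0 < r := by omega
  -- the bijection between (runner, row) pairs of the quotient and
  -- (component, position) pairs of the Uglov preimages
  set f : Fin e × ℤ → Fin r × ℤ := fun p =>
    (⟨r - 1 - (p.2.emod r).toNat, by omega⟩, (p.2.ediv r) * e + (p.1 : ℤ)) with hf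
  set g : Fin r × ℤ → Fin e × ℤ := fun q =>
    (⟨(q.2.emod e).toNat, by
        have h1 : 0 ≤ q.2.emod e := Int.emod_nonneg q.2 (by exact_mod_cast he0.ne' : (e:ℤ) ≠ 0)
        have h2 : q.2.emod e < e := Int.emod_lt_of_pos q.2 (by exact_mod_cast he0 : (0:ℤ) < e)
        omega⟩,
      (q.2.ediv e) * r + ((r - 1 - (q.1 : ℕ) : ℕ) : ℤ)) with hg
  have hjlt : ∀ n : ℤ, (n.emod r).toNat < r := by
    intro n
    have h1 : 0 ≤ n.emod r := Int.emod_nonneg n (by exact_mod_cast hr0.ne' : (r:ℤ) ≠ 0)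
    have h2 : n.emod r < r := Int.emod_lt_of_pos n (by exact_mod_cast hr0 : (0:ℤ) < r)
    omega
  have hgf : ∀ p, g (f p) = p := by
    rintro ⟨i, n⟩
    have hjr := hjlt n
    have hmod0 : 0 ≤ n.emod r := Int.emod_nonneg n (by exact_mod_cast hr0.ne' : (r:ℤ) ≠ 0)
    simp only [hf, hg]
    have h1 : ((n.ediv r * e + (i:ℤ)).emod e) = (i:ℤ) := dm_emod e _ i i.isLt
    have h2 : ((n.ediv r * e + (i:ℤ)).ediv e) = n.ediv r := dm_ediv e he0 _ i i.isLt
    have h3 : (r - 1 - (r - 1 - (n.emod r).toNat) : ℕ) = (n.emod r).toNat := by omega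
    have h4 : n.ediv r * r + ((n.emod r).toNat : ℤ) = n := by
      have hdm : n.ediv r * r + n.emod r = n := by rw [mul_comm]; exact Int.mul_ediv_add_emod n r
      omega
    ext
    · simp [h1, h2, h3]
    · simp only [h1, h2, h3]
      rw [show (((n.emod r).toNat : ℕ) : ℤ) = n.emod r from Int.toNat_of_nonneg hmod0] at h4 ⊢
      exact h4
  have hfg : ∀ q, f (g q) = q := by
    rintro ⟨k, x⟩
    have hmod0 : 0 ≤ x.emod e := Int.emod_nonneg x (by exact_mod_cast he0.ne' : (e:ℤ) ≠ 0)
    have hmodlt : x.emod e < e := Int.emod_lt_of_pos x (by exact_mod_cast he0 : (0:ℤ) < e)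
    have hilt : (x.emod e).toNat < e := by omega
    simp only [hf, hg]
    have h1 : ((x.ediv e * r + ((r - 1 - (k : ℕ) : ℕ) : ℤ)).emod r)
        = ((r - 1 - (k : ℕ) : ℕ) : ℤ) := dm_emod r _ _ (by omega)
    have h2 : ((x.ediv e * r + ((r - 1 - (k : ℕ) : ℕ) : ℤ)).ediv r) = x.ediv e :=
      dm_ediv r hr0 _ _ (by omega)
    have hk := k.isLt
    ext
    · simp only [h1, h2]
      simp only [Int.toNat_natCast]
      omega
    · simp only [h1, h2]
      have hdm : x.ediv e * e + x.emod e = x := by rw [mul_comm]; exact Int.mul_ediv_add_emod x e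
      omega
  have hshift : ∀ (i : Fin e) (n : ℤ),
      f (i, n + r) = ((f (i, n)).1, (f (i, n)).2 + e) := by
    intro i n
    simp only [hf]
    have h1 : (n + r).emod r = n.emod r := by
      show (n + (r:ℤ)) % r = n % r
      rw [show n + (r:ℤ) = n + 1 * r by ring, Int.add_mul_emod_self_right]
    have h2 : (n + r).ediv r = n.ediv r + 1 := by
      show (n + (r:ℤ)) / r = n / r + 1
      rw [show n + (r:ℤ) = n + 1 * r by ring,
        Int.add_mul_ediv_right _ _ (by exact_mod_cast hr0.ne' : (r:ℤ) ≠ 0)]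
    ext
    · simp [h1]
    · simp only [h2]; push_cast; ring
  -- membership correspondence, for an arbitrary set B
  have hmem : ∀ (B : Set ℤ) (i : Fin e) (n : ℤ),
      n ∈ quotSetB e B (i : ℕ) ↔
        (f (i, n)).2 ∈ psi (e : ℤ) (r : ℤ) ((((f (i, n)).1 : ℕ) : ℤ) + 1) ⁻¹' B := by
    intro B i n
    have hjr := hjlt n
    have hmod0 : 0 ≤ n.emod r := Int.emod_nonneg n (by exact_mod_cast hr0.ne' : (r:ℤ) ≠ 0)
    simp only [hf, Set.mem_preimage]
    have h1 : ((n.ediv r * e + (i:ℤ)).emod e) = (i:ℤ) := dm_emod e _ i i.isLt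
    have h2 : ((n.ediv r * e + (i:ℤ)).ediv e) = n.ediv r := dm_ediv e he0 _ i i.isLt
    have hpsi : psi (e : ℤ) (r : ℤ) (((r - 1 - (n.emod r).toNat : ℕ) : ℤ) + 1)
        (n.ediv r * e + (i:ℤ)) = n * e + (i:ℤ) := by
      unfold psi
      rw [h1, h2]
      have hdm : n.ediv r * r + n.emod r = n := by rw [mul_comm]; exact Int.mul_ediv_add_emod n r
      have htn : (((n.emod r).toNat : ℕ) : ℤ) = n.emod r := Int.toNat_of_nonneg hmod0
      have hcast : ((r - 1 - (n.emod r).toNat : ℕ) : ℤ) = (r:ℤ) - 1 - n.emod r := by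
        push_cast [htn]
        omega
      rw [hcast]
      have : (n.ediv r + 1) * r - ((r:ℤ) - 1 - n.emod r + 1) = n := by
        rw [add_mul, one_mul]
        omega
      rw [this]
    rw [hpsi]
    rfl
  constructor
  · exact move1_map (r : ℤ) (e : ℤ) _ _ _ _ f g hgf hfg hshift
      (hmem (betaSet lam s)) (hmem (betaSet mu s))
  · refine move1_map (e : ℤ) (r : ℤ) _ _ _ _ g f hfg hgf ?_ ?_ ?_
    · intro k x
      have h := hshift (g (k, x)).1 (g (k, x)).2
      rw [Prod.mk.eta, hfg] at h
      have h2 := congrArg g h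
      rw [hgf] at h2
      exact h2.symm
    · intro k x
      have h := hmem (betaSet lam s) (g (k, x)).1 (g (k, x)).2
      rw [Prod.mk.eta, hfg] at h
      exact h.symm
    · intro k x
      have h := hmem (betaSet mu s) (g (k, x)).1 (g (k, x)).2
      rw [Prod.mk.eta, hfg] at h
      exact h.symm
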